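/- Let r be a power of an odd prime p, q = r², write q − 1 = e·f, and set R = (r+1)/gcd(r+1, f). Suppose t·f is odd and 1 ≤ t ≤ R/2. Then t·f + 1 belongs to Σ(eg, q). -/

import Mathlib

open Finset

/-- Δ_S(a) = ∏_{b ∈ S, b ≠ a} (a − b). -/
def deltaS {F : Type*} [Field F] [DecidableEq F] (S : Finset F) (a : F) : F :=
  ∏ b ∈ S.erase a, (a - b)

/-- n ∈ Σ(eg,q): n is even, n ≥ 2, and there is S ⊆ F_q with |S| = n − 1 such that
η_q(−Δ_S(a)) = 1, i.e. −Δ_S(a) is a square, for all a ∈ S. -/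
def SigmaEG (F : Type*) [Field F] [DecidableEq F] (n : ℕ) : Prop :=
  Even n ∧ 2 ≤ n ∧ ∃ S : Finset F, S.card = n - 1 ∧
    ∀ a ∈ S, IsSquare (-(deltaS S a))

lemma image_erase_of_injOn' {α β : Type*} [DecidableEq α] [DecidableEq β]
    (f : α → β) (s : Finset α) (hf : ∀ x ∈ s, ∀ y ∈ s, f x = f y → x = y)
    (a : α) (ha : a ∈ s) : (s.erase a).image f = (s.image f).erase (f a) := by
  ext b
  simp only [Finset.mem_image, Finset.mem_erase]
  constructor
  · rintro ⟨x, ⟨hxa, hxs⟩, rfl⟩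
    exact ⟨fun h => hxa (hf x hxs a ha h), x, hxs, rfl⟩
  · rintro ⟨hb, x, hxs, rfl⟩
    exact ⟨x, ⟨fun h => hb (by rw [h]), hxs⟩, rfl⟩

section Roots
variable {F : Type*} [Field F] [DecidableEq F]

lemma prod_X_sub_pow (ζ : F) (f : ℕ) (hf : 0 < f) (hord : orderOf ζ = f) :
    ∏ z ∈ (Finset.range f).image (ζ ^ ·), (Polynomial.X - Polynomial.C z)
      = Polynomial.X ^ f - 1 := by
  have hprim : IsPrimitiveRoot ζ f := hord ▸ IsPrimitiveRoot.orderOf ζ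
  have hfin : IsOfFinOrder ζ := by
    rw [← orderOf_pos_iff, hord]; exact hf
  have hinj : ∀ x ∈ Finset.range f, ∀ y ∈ Finset.range f, ζ ^ x = ζ ^ y → x = y := by
    intro x hx y hy h
    exact pow_injOn_Iio_orderOf (by simpa [hord] using Finset.mem_range.mp hx)
      (by simpa [hord] using Finset.mem_range.mp hy) h
  have hM : (Finset.range f).image (ζ ^ ·) = Polynomial.nthRootsFinset f (1 : F) := by
    apply Finset.eq_of_subset_of_card_le
    · intro x hx
      simp only [Finset.mem_image, Finset.mem_range] at hx
      obtain ⟨i, hi, rfl⟩ := hx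
      rw [Polynomial.mem_nthRootsFinset hf, ← pow_mul, mul_comm, pow_mul, ← hord,
        pow_orderOf_eq_one, one_pow]
    · rw [hprim.card_nthRootsFinset, Finset.card_image_of_injOn
        (fun x hx y hy h => hinj x hx y hy h), Finset.card_range]
  rw [hM]
  exact (Polynomial.X_pow_sub_one_eq_prod hf hprim).symm

lemma prod_sub_roots (ζ : F) (f : ℕ) (hf : 0 < f) (hord : orderOf ζ = f) (y : F) :
    ∏ z ∈ (Finset.range f).image (ζ ^ ·), (y - z) = y ^ f - 1 := by
  have := congrArg (Polynomial.eval y) (prod_X_sub_pow ζ f hf hord)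
  simpa [Polynomial.eval_prod] using this

lemma prod_sub_erase_roots (ζ : F) (f : ℕ) (hf : 0 < f) (hord : orderOf ζ = f)
    (x : F) (hx : x ∈ (Finset.range f).image (ζ ^ ·)) :
    ∏ z ∈ ((Finset.range f).image (ζ ^ ·)).erase x, (x - z) = f * x ^ (f - 1) := by
  set M := (Finset.range f).image (ζ ^ ·) with hMdef
  have hsplit : (Polynomial.X - Polynomial.C x) * ∏ z ∈ M.erase x,
      (Polynomial.X - Polynomial.C z) = Polynomial.X ^ f - 1 := by
    rw [Finset.mul_prod_erase M (fun z => Polynomial.X - Polynomial.C z) hx]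
    exact prod_X_sub_pow ζ f hf hord
  have hder := congrArg Polynomial.derivative hsplit
  rw [Polynomial.derivative_mul, Polynomial.derivative_sub, Polynomial.derivative_X,
    Polynomial.derivative_C, Polynomial.derivative_sub, Polynomial.derivative_X_pow,
    Polynomial.derivative_one] at hder
  have := congrArg (Polynomial.eval x) hder
  simpa [Polynomial.eval_prod] using this

end Roots

theorem main_aux (p m : ℕ) (hp : p.Prime) (hodd : p ≠ 2) (hm : 0 < m)
    (r : ℕ) (hr : r = p ^ m)
    (F : Type*) [Field F] [Fintype F] [DecidableEq F] [CharP F p]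
    (hF : Fintype.card F = r ^ 2)
    (e f t : ℕ) (hef : r ^ 2 - 1 = e * f)
    (hfodd : Odd f) (htodd : Odd t) (ht1 : 1 ≤ t)
    (ht2 : t ≤ (r + 1) / Nat.gcd (r + 1) f / 2) :
    ∃ S : Finset F, S.card = t * f ∧ ∀ a ∈ S, IsSquare (-(deltaS S a)) := by
  -- numerics
  have hp3 : 3 ≤ p := by have := hp.two_le; omega
  have hr3 : 3 ≤ r := hr ▸ le_trans hp3 (Nat.le_self_pow hm.ne' p)
  have hrodd : Odd r := hr ▸ (hp.odd_of_ne_two hodd).pow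
  have hq : r ^ 2 - 1 = (r - 1) * (r + 1) := by
    obtain ⟨s, rfl⟩ : ∃ s, r = s + 1 := ⟨r - 1, by omega⟩
    have h1 : (s + 1) ^ 2 = s * (s + 2) + 1 := by ring
    have h2 : (s + 1 - 1) * (s + 1 + 1) = s * (s + 2) := by
      rw [Nat.add_sub_cancel]
    omega
  have hfpos : 0 < f := hfodd.pos
  have hqpos : 0 < r ^ 2 - 1 := by
    have : 3 * 3 ≤ r * r := Nat.mul_le_mul hr3 hr3
    have : r ^ 2 = r * r := sq r
    omega
  set d := Nat.gcd (r + 1) f with hd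
  have hdpos : 0 < d := Nat.gcd_pos_of_pos_left _ (by omega)
  have hdodd : Odd d := by
    rcases Nat.even_or_odd d with hEv | hOd
    · exfalso
      have : 2 ∣ f := dvd_trans hEv.two_dvd (Nat.gcd_dvd_right _ _)
      rw [Nat.odd_iff] at hfodd; omega
    · exact hOd
  have h2d : 2 * d ∣ r + 1 := by
    have h2 : 2 ∣ r + 1 := by rw [Nat.odd_iff] at hrodd; omega
    have hco : Nat.Coprime 2 d := by
      rw [Nat.coprime_comm]
      exact Nat.Coprime.symm (Nat.coprime_two_left.mpr hdodd)
    exact Nat.Coprime.mul_dvd_of_dvd_of_dvd hco h2 (Nat.gcd_dvd_left _ _)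
  set R2 := (r + 1) / (2 * d) with hR2
  have hR2eq : 2 * d * R2 = r + 1 := Nat.mul_div_cancel' h2d
  have htR2 : t ≤ R2 := by
    rw [Nat.div_div_eq_div_mul] at ht2
    rw [hR2, show 2 * d = d * 2 by ring]
    exact ht2
  have hR2pos : 0 < R2 := lt_of_lt_of_le ht1 htR2
  -- f ∣ (r-1)*d
  have hfdvd : f ∣ (r - 1) * (r + 1) := by
    rw [← hq, hef]; exact dvd_mul_left f e
  obtain ⟨m', n', hm', hn', hf_eq⟩ := exists_dvd_and_dvd_of_dvd_mul hfdvd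
  have hfd : f ∣ (r - 1) * d := by
    have hn'd : n' ∣ d := Nat.dvd_gcd hn' (hf_eq ▸ dvd_mul_left n' m')
    exact hf_eq ▸ mul_dvd_mul hm' hn'd
  set k := (r - 1) * d / f with hk
  have hkeq : f * k = (r - 1) * d := Nat.mul_div_cancel' hfd
  have hkpos : 0 < k := by
    rcases Nat.eq_zero_or_pos k with h0 | h
    · rw [h0, mul_zero] at hkeq
      have : 0 < (r - 1) * d := Nat.mul_pos (by omega) hdpos
      omega
    · exact h
  have hefk : r ^ 2 - 1 = 2 * k * (R2 * f) := by
    have h2 : (2 * k * (R2 * f)) * d = ((r - 1) * (r + 1)) * d := by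
      calc (2 * k * (R2 * f)) * d = (f * k) * (2 * d * R2) := by ring
        _ = ((r - 1) * d) * (r + 1) := by rw [hkeq, hR2eq]
        _ = ((r - 1) * (r + 1)) * d := by ring
    have := Nat.eq_of_mul_eq_mul_right hdpos h2
    rw [hq, ← this]
  -- group setup
  have hcard : Fintype.card Fˣ = r ^ 2 - 1 := by rw [Fintype.card_units, hF]
  obtain ⟨g, hg⟩ := IsCyclic.exists_generator (α := Fˣ)
  have hgord : orderOf g = r ^ 2 - 1 := by
    rw [orderOf_eq_card_of_forall_mem_zpowers hg, Nat.card_eq_fintype_card, hcard]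
  set G : Fˣ := g ^ (2 * k) with hG
  have hGord : orderOf G = R2 * f := by
    rw [hG, orderOf_pow, hgord, hefk]
    rw [Nat.gcd_comm, Nat.gcd_eq_left (dvd_mul_right _ _),
      Nat.mul_div_cancel_left _ (by omega : 0 < 2 * k)]
  set ζu : Fˣ := G ^ R2 with hζu
  have hζord : orderOf ζu = f := by
    rw [hζu, orderOf_pow, hGord, Nat.gcd_comm, Nat.gcd_eq_left (dvd_mul_right _ _),
      Nat.mul_div_cancel_left _ hR2pos]
  set ξu : Fˣ := G ^ f with hξu
  have hξord : orderOf ξu = R2 := by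
    rw [hξu, orderOf_pow, hGord, Nat.gcd_comm, Nat.gcd_eq_left (dvd_mul_left _ _),
      Nat.mul_div_cancel _ hfpos]
  -- index set
  set E : ℕ × ℕ → F := fun ji => ((G ^ (ji.1 + R2 * ji.2) : Fˣ) : F) with hE
  set P : Finset (ℕ × ℕ) := Finset.range t ×ˢ Finset.range f with hP
  have hEinj : ∀ x ∈ P, ∀ y ∈ P, E x = E y → x = y := by
    rintro ⟨j, i⟩ hx ⟨j', i'⟩ hy h
    simp only [hP, Finset.mem_product, Finset.mem_range] at hx hy
    have hu : G ^ (j + R2 * i) = G ^ (j' + R2 * i') := Units.ext h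
    have hlt : ∀ a b : ℕ, a < t → b < f → a + R2 * b < orderOf G := by
      intro a b ha hb
      rw [hGord]
      calc a + R2 * b < R2 + R2 * b := by omega
        _ = R2 * (b + 1) := by ring
        _ ≤ R2 * f := Nat.mul_le_mul_left _ (by omega)
    have heq := pow_injOn_Iio_orderOf (Set.mem_Iio.mpr (hlt _ _ hx.1 hx.2))
      (Set.mem_Iio.mpr (hlt _ _ hy.1 hy.2)) hu
    have hjj : j = j' := by
      have h1 : (j + R2 * i) % R2 = (j' + R2 * i') % R2 := by rw [heq]
      rwa [Nat.add_mul_mod_self_left, Nat.add_mul_mod_self_left,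
        Nat.mod_eq_of_lt (lt_of_lt_of_le hx.1 htR2),
        Nat.mod_eq_of_lt (lt_of_lt_of_le hy.1 htR2)] at h1
    have hii : i = i' := by
      have h2 : R2 * i = R2 * i' := by omega
      exact Nat.eq_of_mul_eq_mul_left hR2pos h2
    exact Prod.ext hjj hii
  set S : Finset F := P.image E with hS
  have hcardS : S.card = t * f := by
    rw [hS, Finset.card_image_of_injOn (fun x hx y hy h => hEinj x hx y hy h), hP,
      Finset.card_product, Finset.card_range, Finset.card_range]
  refine ⟨S, hcardS, ?_⟩
  intro a ha
  obtain ⟨⟨j, i⟩, hji, rfl⟩ := Finset.mem_image.mp ha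
  obtain ⟨hjt, hif⟩ : j < t ∧ i < f := by
    simpa [hP, Finset.mem_product] using hji
  -- field-level elements
  set ζ : F := ((ζu : Fˣ) : F) with hζ
  set ξ : F := ((ξu : Fˣ) : F) with hξ
  have hζordF : orderOf ζ = f := by rw [hζ, orderOf_units, hζord]
  -- basic square lemmas
  have hL1 : ∀ x : F, x ≠ 0 → x ^ (r - 1) = 1 → IsSquare x := by
    intro x hx0 hx
    lift x to Fˣ using hx0.isUnit with xu hxu
    obtain ⟨s, hs⟩ := Submonoid.mem_powers_iff _ _ |>.mp
      (mem_powers_iff_mem_zpowers.mpr (hg xu))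
    have hxpow : xu ^ (r - 1) = 1 := by
      apply Units.ext
      rw [Units.val_pow_eq_pow_val, Units.val_one]
      exact hx
    have hdvd : r ^ 2 - 1 ∣ s * (r - 1) := by
      rw [← hgord]
      apply orderOf_dvd_of_pow_eq_one
      rw [pow_mul, hs]
      exact hxpow
    have hdvd2 : (r - 1) * (r + 1) ∣ (r - 1) * s := by
      rw [← hq, mul_comm (r-1) s]
      exact hdvd
    have hr1 : r + 1 ∣ s := (Nat.mul_dvd_mul_iff_left (by omega : 0 < r - 1)).mp hdvd2
    have h2s : 2 ∣ s := by
      rcases hr1 with ⟨c, hc⟩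
      have h2r : 2 ∣ r + 1 := by rw [Nat.odd_iff] at hrodd; omega
      exact hc ▸ h2r.mul_right c
    obtain ⟨s', rfl⟩ := h2s
    exact ⟨((g ^ s' : Fˣ) : F), by
      rw [← hs, ← Units.val_mul, ← pow_add]
      congr 2
      ring⟩
  have hnsq : ∀ n : ℕ, IsSquare ((n : F)) := by
    intro n
    by_cases h0 : (n : F) = 0
    · rw [h0]; exact ⟨0, by simp⟩
    · apply hL1 _ h0
      haveI : ExpChar F p := ExpChar.prime hp
      have hxp : (n : F) ^ p = (n : F) := by
        have h1 := map_natCast (frobenius F p) n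
        rwa [frobenius_def] at h1
      have hxr : (n : F) ^ r = (n : F) := by
        have hgen : ∀ mm : ℕ, (n : F) ^ p ^ mm = (n : F) := by
          intro mm
          induction mm with
          | zero => simp
          | succ mm2 ih => rw [pow_succ, pow_mul, ih, hxp]
        rw [hr]; exact hgen m
      have hstep : (n : F) ^ (r - 1) * (n : F) = 1 * (n : F) := by
        rw [← pow_succ, show r - 1 + 1 = r by omega, hxr, one_mul]
      exact mul_right_cancel₀ h0 hstep
  have hsqneg1 : IsSquare (-1 : F) := by
    rw [FiniteField.isSquare_neg_one_iff, hF]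
    obtain ⟨s, hs⟩ := hrodd
    have : r ^ 2 = 4 * (s * s + s) + 1 := by rw [hs]; ring
    omega
  haveI : ExpChar F p := ExpChar.prime hp
  obtain ⟨u2, hu2⟩ : ∃ u2, r + 1 = 2 * u2 := by
    rw [Nat.odd_iff] at hrodd; exact ⟨(r+1)/2, by omega⟩
  set δ : F := ((g ^ u2 : Fˣ) : F) with hδ
  have hδ0 : δ ≠ 0 := Units.ne_zero _
  have hneg : ((g ^ ((r - 1) * u2) : Fˣ) : F) = -1 := by
    have hexp : (r - 1) * u2 * 2 = r ^ 2 - 1 := by rw [hq, hu2]; ring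
    have hsq2 : (g ^ ((r - 1) * u2)) ^ 2 = 1 := by
      rw [← pow_mul, hexp, ← hgord, pow_orderOf_eq_one]
    have hne1 : g ^ ((r - 1) * u2) ≠ 1 := by
      intro hcon
      have hdvd := orderOf_dvd_of_pow_eq_one hcon
      rw [hgord] at hdvd
      have hle := Nat.le_of_dvd (by omega) hdvd
      omega
    have hsqF : (((g ^ ((r - 1) * u2) : Fˣ) : F)) ^ 2 = 1 := by
      rw [← Units.val_pow_eq_pow_val, hsq2, Units.val_one]
    have hfac : (((g ^ ((r-1)*u2) : Fˣ) : F) - 1) * (((g ^ ((r-1)*u2) : Fˣ) : F) + 1) = 0 := by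
      linear_combination hsqF
    rcases mul_eq_zero.mp hfac with hc1 | hc2
    · exfalso
      exact hne1 (Units.ext (by rw [Units.val_one]; exact sub_eq_zero.mp hc1))
    · exact eq_neg_of_add_eq_zero_left hc2
  have hδr1 : δ ^ (r - 1) = -1 := by
    rw [hδ, ← Units.val_pow_eq_pow_val, ← pow_mul,
      show u2 * (r - 1) = (r - 1) * u2 by ring]
    exact hneg
  have hδr : δ ^ r = -δ := by
    have h1 : δ ^ r = δ ^ (r - 1) * δ := by rw [← pow_succ, show r - 1 + 1 = r by omega]
    rw [h1, hδr1]; ring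
  have hdiff : ∀ n : ℕ, 0 < n → n < R2 → IsSquare (δ⁻¹ * (ξ ^ n - 1)) := by
    intro n hn0 hnR
    set Zu : Fˣ := g ^ (k * f * n) with hZu
    set z : F := ((Zu : Fˣ) : F) with hz
    have hz0 : z ≠ 0 := Units.ne_zero _
    have hZsq : Zu ^ 2 = ξu ^ n := by
      rw [hZu, hξu, hG, ← pow_mul, ← pow_mul, ← pow_mul]
      congr 1
      ring
    have hz2 : z ^ 2 = ξ ^ n := by
      rw [hz, hξ, ← Units.val_pow_eq_pow_val, ← Units.val_pow_eq_pow_val, hZsq]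
    have hξn1 : ξ ^ n ≠ 1 := by
      intro hcon
      have h1 : ξu ^ n = 1 := Units.ext
        (by rw [Units.val_pow_eq_pow_val, Units.val_one]; exact hcon)
      have h2 := orderOf_dvd_of_pow_eq_one h1
      rw [hξord] at h2
      exact absurd (Nat.le_of_dvd hn0 h2) (by omega)
    have hzr : z ^ (r + 1) = 1 := by
      have h1 : Zu ^ (r + 1) = 1 := by
        rw [hZu, ← pow_mul]
        apply orderOf_dvd_iff_pow_eq_one.mp
        rw [hgord]
        refine ⟨d * n, ?_⟩
        calc k * f * n * (r + 1) = (f * k) * (r + 1) * n := by ring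
          _ = ((r - 1) * d) * (r + 1) * n := by rw [hkeq]
          _ = ((r - 1) * (r + 1)) * (d * n) := by ring
          _ = (r ^ 2 - 1) * (d * n) := by rw [hq]
      rw [hz, ← Units.val_pow_eq_pow_val, h1, Units.val_one]
    have hzrinv : z ^ r = z⁻¹ := by
      have h1 : z * z ^ r = 1 := by rw [← pow_succ']; exact hzr
      exact eq_inv_of_mul_eq_one_right h1
    set v : F := z - z⁻¹ with hv
    have hv0 : v ≠ 0 := by
      rw [hv, sub_ne_zero]
      intro hcon
      apply hξn1
      rw [← hz2, sq]
      nth_rewrite 2 [hcon]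
      exact mul_inv_cancel₀ hz0
    have hvr : v ^ r = -v := by
      have hchar : (z - z⁻¹) ^ r = z ^ r - (z⁻¹) ^ r := by
        haveI : Fact p.Prime := ⟨hp⟩
        rw [hr]; exact sub_pow_char_pow z z⁻¹ m
      rw [hv, hchar, hzrinv, inv_pow, hzrinv, inv_inv]
      ring
    set w : F := δ⁻¹ * v with hw
    have hw0 : w ≠ 0 := mul_ne_zero (inv_ne_zero hδ0) hv0
    have hwr : w ^ (r - 1) = 1 := by
      have hwrr : w ^ r = w := by
        rw [hw, mul_pow, inv_pow, hδr, hvr, inv_neg]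
        ring
      have hstep : w ^ (r - 1) * w = 1 * w := by
        rw [← pow_succ, show r - 1 + 1 = r by omega, hwrr, one_mul]
      exact mul_right_cancel₀ hw0 hstep
    have hsqw : IsSquare w := hL1 w hw0 hwr
    have hsqz : IsSquare z := by
      obtain ⟨s2, hs2⟩ : ∃ s2, k * f * n = s2 + s2 := by
        obtain ⟨sr, hsr⟩ := hrodd
        refine ⟨sr * d * n, ?_⟩
        have h1 : k * f = (r - 1) * d := by rw [mul_comm]; exact hkeq
        calc k * f * n = (r - 1) * d * n := by rw [h1]
          _ = sr * d * n + sr * d * n := by rw [show r - 1 = 2 * sr by omega]; ring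
      exact ⟨((g ^ s2 : Fˣ) : F), by rw [hz, hZu, hs2, pow_add, Units.val_mul]⟩
    have hfinal : δ⁻¹ * (ξ ^ n - 1) = z * w := by
      rw [hw, ← hz2, hv]
      field_simp
    rw [hfinal]
    exact hsqz.mul hsqw
  -- roots-of-unity set
  set M : Finset F := (Finset.range f).image (ζ ^ ·) with hM
  have hζinj : ∀ x ∈ Finset.range f, ∀ y ∈ Finset.range f, ζ ^ x = ζ ^ y → x = y := by
    intro x hx y hy h
    exact pow_injOn_Iio_orderOf (by simpa [hζordF] using Finset.mem_range.mp hx)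
      (by simpa [hζordF] using Finset.mem_range.mp hy) h
  have hEexp : ∀ j' i' : ℕ, E (j', i') = ((G ^ j' : Fˣ) : F) * ζ ^ i' := by
    intro j' i'
    rw [hE]
    simp only
    rw [pow_add, pow_mul, Units.val_mul, ← hζu, hζ]
    simp [Units.val_pow_eq_pow_val]
  have hEf : ∀ j' i' : ℕ, (E (j', i')) ^ f = ξ ^ j' := by
    intro j' i'
    rw [hE]
    simp only
    rw [← Units.val_pow_eq_pow_val, ← pow_mul]
    have hGpow : G ^ ((j' + R2 * i') * f) = ξu ^ j' := by
      rw [hξu]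
      calc G ^ ((j' + R2 * i') * f) = G ^ (f * j' + R2 * f * i') := by ring_nf
        _ = (G ^ f) ^ j' * (G ^ (R2 * f)) ^ i' := by
            rw [pow_add, pow_mul, pow_mul]
        _ = (G ^ f) ^ j' := by rw [← hGord, pow_orderOf_eq_one, one_pow, mul_one]
    rw [hGpow, hξ, Units.val_pow_eq_pow_val]
  have h1 : S.erase (E (j, i)) = (P.erase (j, i)).image E :=
    (image_erase_of_injOn' E P hEinj (j, i) hji).symm
  have hEinj' : ∀ x ∈ P.erase (j, i), ∀ y ∈ P.erase (j, i), E x = E y → x = y :=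
    fun x hx y hy h => hEinj x (Finset.mem_of_mem_erase hx) y (Finset.mem_of_mem_erase hy) h
  have h2 : deltaS S (E (j, i)) = ∏ x ∈ P.erase (j, i), (E (j, i) - E x) := by
    rw [deltaS, h1, Finset.prod_image hEinj']
  have hsplitP : P.erase (j, i) = ({j} ×ˢ ((Finset.range f).erase i)) ∪
      (((Finset.range t).erase j) ×ˢ Finset.range f) := by
    ext ⟨x, y⟩
    simp only [hP, Finset.mem_erase, Finset.mem_product, Finset.mem_union,
      Finset.mem_singleton, Finset.mem_range, Prod.mk.injEq, Ne, not_and]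
    constructor
    · rintro ⟨hne, hx, hy⟩
      by_cases hxj : x = j
      · subst hxj
        exact Or.inl ⟨rfl, ⟨fun h => hne rfl h, hy⟩⟩
      · exact Or.inr ⟨⟨hxj, hx⟩, hy⟩
    · rintro (⟨rfl, hy1, hy2⟩ | ⟨⟨hx1, hx2⟩, hy⟩)
      · exact ⟨fun _ h => hy1 h, hjt, hy2⟩
      · exact ⟨fun h => absurd h hx1, hx2, hy⟩
  have hdisj : Disjoint ({j} ×ˢ ((Finset.range f).erase i))
      (((Finset.range t).erase j) ×ˢ Finset.range f) := by
    rw [Finset.disjoint_left]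
    rintro ⟨x, y⟩ hx1 hx2
    simp only [Finset.mem_product, Finset.mem_singleton, Finset.mem_erase] at hx1 hx2
    exact hx2.1.1 hx1.1
  have hcardEr : ((Finset.range f).erase i).card = f - 1 := by
    rw [Finset.card_erase_of_mem (Finset.mem_range.mpr hif), Finset.card_range]
  have hA : ∏ x ∈ {j} ×ˢ ((Finset.range f).erase i), (E (j, i) - E x)
      = ((G ^ j : Fˣ) : F) ^ (f - 1) * ((f : F) * (ζ ^ i) ^ (f - 1)) := by
    rw [Finset.prod_product, Finset.prod_singleton]
    have step1 : ∀ i' ∈ (Finset.range f).erase i,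
        E (j, i) - E (j, i') = ((G ^ j : Fˣ) : F) * (ζ ^ i - ζ ^ i') := by
      intro i' _
      rw [hEexp, hEexp]; ring
    rw [Finset.prod_congr rfl step1, Finset.prod_mul_distrib, Finset.prod_const, hcardEr]
    congr 1
    have hinj2 : ∀ x ∈ (Finset.range f).erase i, ∀ y ∈ (Finset.range f).erase i,
        ζ ^ x = ζ ^ y → x = y := fun x hx y hy h =>
      hζinj x (Finset.mem_of_mem_erase hx) y (Finset.mem_of_mem_erase hy) h
    have himg : ((Finset.range f).erase i).image (ζ ^ ·) = M.erase (ζ ^ i) := by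
      rw [hM]
      exact image_erase_of_injOn' _ _ hζinj i (Finset.mem_range.mpr hif)
    have hmemM : ζ ^ i ∈ (Finset.range f).image (ζ ^ ·) :=
      Finset.mem_image.mpr ⟨i, Finset.mem_range.mpr hif, rfl⟩
    calc ∏ i' ∈ (Finset.range f).erase i, (ζ ^ i - ζ ^ i')
        = ∏ z ∈ ((Finset.range f).erase i).image (ζ ^ ·), (ζ ^ i - z) :=
          (Finset.prod_image hinj2).symm
      _ = ∏ z ∈ ((Finset.range f).image (ζ ^ ·)).erase (ζ ^ i), (ζ ^ i - z) := by
          rw [himg, hM]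
      _ = f * (ζ ^ i) ^ (f - 1) := prod_sub_erase_roots ζ f hfpos hζordF (ζ ^ i) hmemM
  have hξ0 : ξ ≠ 0 := by rw [hξ]; exact Units.ne_zero _
  have hB : ∏ x ∈ ((Finset.range t).erase j) ×ˢ Finset.range f, (E (j, i) - E x)
      = ∏ j' ∈ (Finset.range t).erase j, (ξ ^ j - ξ ^ j') := by
    rw [Finset.prod_product]
    apply Finset.prod_congr rfl
    intro j' hj'
    have hc0 : ((G ^ j' : Fˣ) : F) ≠ 0 := Units.ne_zero _
    have step : ∀ i' ∈ Finset.range f, E (j, i) - E (j', i')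
        = ((G ^ j' : Fˣ) : F) * (E (j, i) / ((G ^ j' : Fˣ) : F) - ζ ^ i') := by
      intro i' _
      rw [hEexp j' i']
      field_simp
    rw [Finset.prod_congr rfl step, Finset.prod_mul_distrib, Finset.prod_const,
      Finset.card_range]
    have hprod : ∏ i' ∈ Finset.range f, (E (j, i) / ((G ^ j' : Fˣ) : F) - ζ ^ i')
        = (E (j, i) / ((G ^ j' : Fˣ) : F)) ^ f - 1 := by
      calc ∏ i' ∈ Finset.range f, (E (j, i) / ((G ^ j' : Fˣ) : F) - ζ ^ i')
          = ∏ z ∈ (Finset.range f).image (ζ ^ ·), (E (j, i) / ((G ^ j' : Fˣ) : F) - z) :=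
            (Finset.prod_image hζinj).symm
        _ = _ := prod_sub_roots ζ f hfpos hζordF _
    rw [hprod, div_pow, hEf j i]
    have hGf : ((G ^ j' : Fˣ) : F) ^ f = ξ ^ j' := by
      rw [← Units.val_pow_eq_pow_val, ← pow_mul, mul_comm j' f, pow_mul, ← hξu, hξ,
        Units.val_pow_eq_pow_val]
    rw [hGf]
    field_simp
  have hsqξ : IsSquare ξ := by
    refine ⟨((g ^ (k * f) : Fˣ) : F), ?_⟩
    rw [hξ, hξu, hG, ← pow_mul, ← Units.val_mul, ← pow_add]
    congr 2
    ring
  have hpair : ∀ j' ∈ (Finset.range t).erase j, IsSquare (δ⁻¹ * (ξ ^ j - ξ ^ j')) := by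
    intro j' hj'
    obtain ⟨hne, hj't⟩ : j' ≠ j ∧ j' < t := by
      have h3 := Finset.mem_erase.mp hj'
      exact ⟨h3.1, Finset.mem_range.mp h3.2⟩
    rcases Nat.lt_or_ge j' j with hlt | hge
    · have hrw : δ⁻¹ * (ξ ^ j - ξ ^ j') = ξ ^ j' * (δ⁻¹ * (ξ ^ (j - j') - 1)) := by
        have hsp : ξ ^ j = ξ ^ j' * ξ ^ (j - j') := by rw [← pow_add]; congr 1; omega
        rw [hsp]; ring
      rw [hrw]
      exact (hsqξ.pow j').mul (hdiff (j - j') (by omega) (by omega))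
    · have hlt2 : j < j' := by omega
      have hrw : δ⁻¹ * (ξ ^ j - ξ ^ j') = -1 * (ξ ^ j * (δ⁻¹ * (ξ ^ (j' - j) - 1))) := by
        have hsp : ξ ^ j' = ξ ^ j * ξ ^ (j' - j) := by rw [← pow_add]; congr 1; omega
        rw [hsp]; ring
      rw [hrw]
      exact hsqneg1.mul ((hsqξ.pow j).mul (hdiff (j' - j) (by omega) (by omega)))
  have hcardT : ((Finset.range t).erase j).card = t - 1 := by
    rw [Finset.card_erase_of_mem (Finset.mem_range.mpr hjt), Finset.card_range]
  have hBsq : IsSquare (∏ j' ∈ (Finset.range t).erase j, (ξ ^ j - ξ ^ j')) := by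
    have hrw : ∀ j' ∈ (Finset.range t).erase j,
        ξ ^ j - ξ ^ j' = δ * (δ⁻¹ * (ξ ^ j - ξ ^ j')) := by
      intro j' _
      field_simp
    rw [Finset.prod_congr rfl hrw, Finset.prod_mul_distrib, Finset.prod_const, hcardT]
    have hevent : Even (t - 1) := by
      rw [Nat.odd_iff] at htodd; rw [Nat.even_iff]; omega
    refine (hevent.isSquare_pow δ).mul ?_
    exact Finset.prod_induction _ IsSquare (fun a b ha hb => ha.mul hb) IsSquare.one hpair
  have hevenf : Even (f - 1) := by
    rw [Nat.odd_iff] at hfodd; rw [Nat.even_iff]; omega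
  rw [h2, hsplitP, Finset.prod_union hdisj, hA, hB]
  have hfin : -(((G ^ j : Fˣ) : F) ^ (f - 1) * ((f : F) * (ζ ^ i) ^ (f - 1)) *
      ∏ j' ∈ (Finset.range t).erase j, (ξ ^ j - ξ ^ j'))
      = -1 * ((((G ^ j : Fˣ) : F) ^ (f - 1) * ((f : F) * (ζ ^ i) ^ (f - 1))) *
      ∏ j' ∈ (Finset.range t).erase j, (ξ ^ j - ξ ^ j')) := by ring
  rw [hfin]
  exact hsqneg1.mul (((hevenf.isSquare_pow _).mul ((hnsq f).mul
    (hevenf.isSquare_pow _))).mul hBsq)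


theorem stmt_12 (p m : ℕ) (hp : p.Prime) (hodd : p ≠ 2) (hm : 0 < m)
    (r : ℕ) (hr : r = p ^ m)
    (F : Type*) [Field F] [Fintype F] [DecidableEq F] (hF : Fintype.card F = r ^ 2)
    (e f t : ℕ) (hef : r ^ 2 - 1 = e * f)
    (htf : Odd (t * f)) (ht1 : 1 ≤ t) (ht2 : t ≤ (r + 1) / Nat.gcd (r + 1) f / 2) :
    SigmaEG F (t * f + 1) := by
  obtain ⟨htodd, hfodd⟩ := Nat.odd_mul.mp htf
  haveI hchar : CharP F p := by
    obtain ⟨p', hp'⟩ := CharP.exists F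
    haveI := hp'
    obtain ⟨n, hpp', hcard⟩ := FiniteField.card F p'
    have heq : p = p' := by
      have h1 : p ∣ p' ^ (n : ℕ) := by
        rw [← hcard, hF, hr, ← pow_mul]
        exact dvd_pow_self p (by positivity)
      exact (Nat.prime_dvd_prime_iff_eq hp hpp').mp (hp.dvd_of_dvd_pow h1)
    exact heq ▸ hp'
  obtain ⟨S, hScard, hSsq⟩ := main_aux p m hp hodd hm r hr F hF e f t hef hfodd htodd ht1 ht2
  exact ⟨htf.add_one, by have := htf.pos; omega, S, by simpa using hScard, hSsq⟩
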